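/- Let {A, B} be a polyphase GCA pair of size s_1×⋯×s_r and {C, D} a polyphase GCA pair of size t_1×⋯×t_r, and fix a dimension index i. Define E as the concatenation of A⊗C and B⊗D in the i-th dimension, and F as the concatenation of B*⊗C and −A*⊗D in the i-th dimension. Then {E, F} is a polyphase GCA pair of size s_1t_1×⋯×2s_it_i×⋯×s_rt_r. -/

import Mathlib

open scoped BigOperators

/-- An `r`-dimensional complex array, as a complex-valued function on ℤ^r. -/
abbrev Arr (r : ℕ) := (Fin r → ℤ) → ℂ

/-- Index tuple `i` lies in the box `[0, s₁) × ⋯ × [0, s_r)`. -/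
def InBox {r : ℕ} (s : Fin r → ℕ) (i : Fin r → ℤ) : Prop :=
  ∀ k, 0 ≤ i k ∧ i k < (s k : ℤ)

/-- The array vanishes outside the box of size `s`. -/
def SupportedOn {r : ℕ} (s : Fin r → ℕ) (A : Arr r) : Prop :=
  ∀ i, ¬ InBox s i → A i = 0

/-- Aperiodic autocorrelation of an array. -/
noncomputable def autocorr {r : ℕ} (A : Arr r) (δ : Fin r → ℤ) : ℂ :=
  ∑ᶠ i : Fin r → ℤ, A i * (starRingEnd ℂ) (A (i - δ))

/-- Weight of an array: the sum of squared moduli of its entries. -/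
noncomputable def weight {r : ℕ} (A : Arr r) : ℝ :=
  ∑ᶠ i : Fin r → ℤ, ‖A i‖ ^ 2

/-- Flipped-and-conjugated array `A*`, relative to size `s`. -/
noncomputable def flipConj {r : ℕ} (s : Fin r → ℕ) (A : Arr r) : Arr r :=
  fun i => (starRingEnd ℂ) (A fun k => (s k : ℤ) - 1 - i k)

/-- Kronecker product of arrays, where `t` is the size of `B`:
`(A ⊗ B)[i·t + j] = A[i]·B[j]`. -/
noncomputable def kron {r : ℕ} (t : Fin r → ℕ) (A B : Arr r) : Arr r :=
  fun i => A (fun k => i k / (t k : ℤ)) * B (fun k => i k % (t k : ℤ))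

/-- Concatenation of `X` (of extent `u` in dimension `i0`) and `Y` in dimension `i0`. -/
noncomputable def concat {r : ℕ} (i0 : Fin r) (u : ℕ) (X Y : Arr r) : Arr r :=
  fun v => if v i0 < (u : ℤ) then X v else Y (Function.update v i0 (v i0 - u))

/-- A polyphase array of size `s`: supported on the box and all in-box entries
are `N`-th roots of unity for some `N`. -/
def IsPolyphase {r : ℕ} (s : Fin r → ℕ) (A : Arr r) : Prop :=
  SupportedOn s A ∧ ∃ N : ℕ, 0 < N ∧ ∀ i, InBox s i → A i ^ N = 1

/-- A binary array of size `s`: all in-box entries are ±1, zero outside. -/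
def IsBinary {r : ℕ} (s : Fin r → ℕ) (A : Arr r) : Prop :=
  SupportedOn s A ∧ ∀ i, InBox s i → A i = 1 ∨ A i = -1

/-- Entries are zero or of modulus one, supported on the box of size `s`. -/
def IsUnimodZero {r : ℕ} (s : Fin r → ℕ) (A : Arr r) : Prop :=
  SupportedOn s A ∧ ∀ i, InBox s i → A i = 0 ∨ ‖A i‖ = 1

/-- Golay complementarity of a pair: `R_A + R_B = (w(A)+w(B))·Δ`. -/
def ComplementaryPair {r : ℕ} (A B : Arr r) : Prop :=
  ∀ δ : Fin r → ℤ, autocorr A δ + autocorr B δ =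
    if δ = 0 then ((weight A + weight B : ℝ) : ℂ) else 0

/-- Golay complementarity of a quad: `R_A + R_B + R_C + R_D = (Σ w)·Δ`. -/
def ComplementaryQuad {r : ℕ} (A B C D : Arr r) : Prop :=
  ∀ δ : Fin r → ℤ, autocorr A δ + autocorr B δ + autocorr C δ + autocorr D δ =
    if δ = 0 then ((weight A + weight B + weight C + weight D : ℝ) : ℂ) else 0

namespace Stmt7Aux

open Finset

variable {r : ℕ}

/-- The box as a finset. -/
noncomputable def box (s : Fin r → ℕ) : Finset (Fin r → ℤ) :=
  Fintype.piFinset fun k => Finset.Ico (0:ℤ) (s k)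

lemma mem_box {s : Fin r → ℕ} {i : Fin r → ℤ} : i ∈ box s ↔ InBox s i := by
  simp [box, Fintype.mem_piFinset, Finset.mem_Ico, InBox]

/-- General cross-correlation. -/
noncomputable def ccor (X Y : Arr r) (δ : Fin r → ℤ) : ℂ :=
  ∑ᶠ i : Fin r → ℤ, X i * (starRingEnd ℂ) (Y (i - δ))

lemma autocorr_eq_ccor (A : Arr r) (δ : Fin r → ℤ) : autocorr A δ = ccor A A δ := rfl

lemma ccor_eq_sum {s : Fin r → ℕ} {X : Arr r} (hX : SupportedOn s X) (Y : Arr r)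
    (δ : Fin r → ℤ) :
    ccor X Y δ = ∑ i ∈ box s, X i * (starRingEnd ℂ) (Y (i - δ)) := by
  apply finsum_eq_sum_of_support_subset
  intro i hi
  simp only [Function.mem_support] at hi
  by_contra hmem
  rw [mem_coe, mem_box] at hmem
  exact hi (by rw [hX i hmem, zero_mul])

lemma weight_eq_autocorr_zero {s : Fin r → ℕ} {X : Arr r} (hX : SupportedOn s X) :
    ((weight X : ℝ) : ℂ) = autocorr X 0 := by
  have h1 : weight X = ∑ i ∈ box s, ‖X i‖ ^ 2 := by
    apply finsum_eq_sum_of_support_subset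
    intro i hi
    simp only [Function.mem_support] at hi
    by_contra hmem
    rw [mem_coe, mem_box] at hmem
    exact hi (by rw [hX i hmem]; simp)
  have h2 : autocorr X 0 = ∑ i ∈ box s, X i * (starRingEnd ℂ) (X i) := by
    rw [autocorr_eq_ccor, ccor_eq_sum hX]
    simp
  rw [h1, h2, Complex.ofReal_sum]
  refine Finset.sum_congr rfl fun i _ => ?_
  rw [Complex.mul_conj]
  norm_cast
  rw [← Complex.sq_norm]

/-- componentwise quotient -/
def qd (t : Fin r → ℕ) (i : Fin r → ℤ) : Fin r → ℤ := fun k => i k / (t k : ℤ)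
/-- componentwise remainder -/
def rd (t : Fin r → ℕ) (i : Fin r → ℤ) : Fin r → ℤ := fun k => i k % (t k : ℤ)

lemma kron_apply (t : Fin r → ℕ) (P Q : Arr r) (i : Fin r → ℤ) :
    kron t P Q i = P (qd t i) * Q (rd t i) := rfl

lemma ediv_eq_zero_iff {x T : ℤ} (hT : 0 < T) : x / T = 0 ↔ 0 ≤ x ∧ x < T := by
  constructor
  · intro h
    constructor
    · by_contra hx
      push_neg at hx
      exact absurd h (by have := Int.ediv_neg_of_neg_of_pos hx hT; omega)
    · by_contra hx
      push_neg at hx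
      have : (1:ℤ) ≤ x / T := (Int.le_ediv_iff_mul_le hT).2 (by omega)
      omega
  · intro ⟨h1, h2⟩
    exact Int.ediv_eq_zero_of_lt h1 h2

lemma supportedOn_mono {s s' : Fin r → ℕ} (h : ∀ k, s k ≤ s' k) {X : Arr r}
    (hX : SupportedOn s X) : SupportedOn s' X := by
  intro i hi
  apply hX
  intro hbox
  exact hi fun k => ⟨(hbox k).1, lt_of_lt_of_le (hbox k).2 (by exact_mod_cast h k)⟩

lemma supportedOn_kron {s t : Fin r → ℕ} (ht : ∀ k, 0 < t k) {P Q : Arr r}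
    (hP : SupportedOn s P) :
    SupportedOn (fun k => s k * t k) (kron t P Q) := by
  intro i hi
  rw [kron_apply]
  have : ¬ InBox s (qd t i) := by
    intro hq
    apply hi
    intro k
    have htk : (0:ℤ) < (t k : ℤ) := by exact_mod_cast ht k
    obtain ⟨h1, h2⟩ := hq k
    simp only [qd] at h1 h2
    constructor
    · by_contra hx
      push_neg at hx
      exact absurd h1 (by have := Int.ediv_neg_of_neg_of_pos hx htk; omega)
    · have := (Int.ediv_lt_iff_lt_mul htk).1 h2
      push_cast
      linarith [this]
  rw [hP _ this, zero_mul]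

lemma qd_mem_box {s t : Fin r → ℕ} (ht : ∀ k, 0 < t k) {i : Fin r → ℤ}
    (hi : InBox (fun k => s k * t k) i) : InBox s (qd t i) := by
  intro k
  have htk : (0:ℤ) < (t k : ℤ) := by exact_mod_cast ht k
  obtain ⟨h1, h2⟩ := hi k
  simp only [qd]
  refine ⟨Int.ediv_nonneg h1 (le_of_lt htk), ?_⟩
  rw [Int.ediv_lt_iff_lt_mul htk]
  push_cast at h2 ⊢
  linarith

lemma rd_mem_box {t : Fin r → ℕ} (ht : ∀ k, 0 < t k) (i : Fin r → ℤ) :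
    InBox t (rd t i) := by
  intro k
  have htk : (0:ℤ) < (t k : ℤ) := by exact_mod_cast ht k
  exact ⟨Int.emod_nonneg _ (ne_of_gt htk), Int.emod_lt_of_pos _ htk⟩

lemma supportedOn_flipConj {s : Fin r → ℕ} {X : Arr r} (hX : SupportedOn s X) :
    SupportedOn s (flipConj s X) := by
  intro i hi
  rw [flipConj]
  rw [hX _ (fun hbox => hi fun k => by obtain ⟨h1, h2⟩ := hbox k; simp only at h1 h2; omega)]
  simp

lemma flipConj_flipConj (s : Fin r → ℕ) (X : Arr r) : flipConj s (flipConj s X) = X := by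
  funext i
  simp only [flipConj, Complex.conj_conj]
  congr 1
  funext k
  ring


/-- The key involution identity: correlations of Kronecker products are unchanged
when the left factors are flipped-conjugated and swapped. -/
lemma ccor_kron_flip (s t : Fin r → ℕ) (ht : ∀ k, 0 < t k) (P P' Q Q' : Arr r)
    (δ : Fin r → ℤ) :
    ccor (kron t P Q) (kron t P' Q') δ
      = ccor (kron t (flipConj s P') Q) (kron t (flipConj s P) Q') δ := by
  classical
  set m : (Fin r → ℤ) → Fin r → ℤ :=
    fun i k => ((s k : ℤ) - 1) - (i k - δ k) / (t k : ℤ) - i k / (t k : ℤ) with hm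
  set φ : (Fin r → ℤ) → Fin r → ℤ := fun i k => i k + m i k * (t k : ℤ) with hφ
  have htk : ∀ k, ((t k : ℤ)) ≠ 0 := fun k => by
    have := ht k; positivity
  have hdiv : ∀ (i : Fin r → ℤ) (k : Fin r), φ i k / (t k : ℤ) = i k / (t k : ℤ) + m i k :=
    fun i k => Int.add_mul_ediv_right _ _ (htk k)
  have hdivδ : ∀ (i : Fin r → ℤ) (k : Fin r),
      (φ i k - δ k) / (t k : ℤ) = (i k - δ k) / (t k : ℤ) + m i k := fun i k => by
    rw [show φ i k - δ k = (i k - δ k) + m i k * (t k : ℤ) by simp [hφ]; ring]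
    exact Int.add_mul_ediv_right _ _ (htk k)
  have hmod : ∀ (i : Fin r → ℤ) (k : Fin r), φ i k % (t k : ℤ) = i k % (t k : ℤ) :=
    fun i k => Int.add_mul_emod_self_right _ _ _
  have hmodδ : ∀ (i : Fin r → ℤ) (k : Fin r),
      (φ i k - δ k) % (t k : ℤ) = (i k - δ k) % (t k : ℤ) := fun i k => by
    rw [show φ i k - δ k = (i k - δ k) + m i k * (t k : ℤ) by simp [hφ]; ring]
    exact Int.add_mul_emod_self_right _ _ _
  have hinv : Function.Involutive φ := by
    intro i
    funext k
    have h1 := hdiv i k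
    have h2 := hdivδ i k
    have e1 : m (φ i) k = - m i k := by
      simp only [hm]
      rw [h1, h2]
      simp only [hm]
      ring
    show φ i k + m (φ i) k * (t k : ℤ) = i k
    rw [e1]
    simp only [hφ]
    ring
  refine finsum_eq_of_bijective φ hinv.bijective fun i => ?_
  simp only [kron, flipConj, Pi.sub_apply, map_mul, Complex.conj_conj]
  have e1 : (fun k => ((s k:ℤ) - 1) - φ i k / (t k : ℤ)) = fun k => (i k - δ k) / (t k:ℤ) := by
    funext k
    rw [hdiv i k]
    simp only [hm]
    ring
  have e2 : (fun k => ((s k:ℤ) - 1) - ((fun k => φ i k - δ k) k) / (t k : ℤ))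
      = fun k => i k / (t k:ℤ) := by
    funext k
    simp only
    rw [hdivδ i k]
    simp only [hm]
    ring
  have e3 : (fun k => φ i k % (t k:ℤ)) = fun k => i k % (t k:ℤ) := funext fun k => hmod i k
  have e4 : (fun k => (φ i k - δ k) % (t k:ℤ)) = fun k => (i k - δ k) % (t k:ℤ) :=
    funext fun k => hmodδ i k
  rw [e1, e3]
  rw [show (fun k => ((s k:ℤ) - 1) - (φ i k - δ k) / (t k : ℤ)) = fun k => i k / (t k:ℤ) from e2]
  rw [e4]
  ring


/-- Shift of an array by `u` in direction `i0`. -/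
noncomputable def shf (i0 : Fin r) (u : ℕ) (Z : Arr r) : Arr r :=
  fun v => Z (Function.update v i0 (v i0 - (u:ℤ)))

/-- The shift vector. -/
def dvec (i0 : Fin r) (u : ℕ) : Fin r → ℤ := fun k => if k = i0 then (u:ℤ) else 0

lemma update_eq_sub_dvec (i0 : Fin r) (u : ℕ) (v : Fin r → ℤ) :
    Function.update v i0 (v i0 - (u:ℤ)) = v - dvec i0 u := by
  funext k
  simp only [Function.update_apply, Pi.sub_apply, dvec]
  split
  · next h => subst h; rfl
  · simp

lemma ccor_shf_right (i0 : Fin r) (u : ℕ) (X Z : Arr r) (δ : Fin r → ℤ) :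
    ccor X (shf i0 u Z) δ = ccor X Z (δ + dvec i0 u) := by
  unfold ccor
  apply finsum_congr
  intro i
  congr 2
  rw [shf, update_eq_sub_dvec]
  congr 1
  abel

lemma ccor_shf_left (i0 : Fin r) (u : ℕ) (X Z : Arr r) (δ : Fin r → ℤ) :
    ccor (shf i0 u Z) X δ = ccor Z X (δ - dvec i0 u) := by
  unfold ccor
  refine (finsum_eq_of_bijective (fun i => i + dvec i0 u)
    (Equiv.addRight (dvec i0 u)).bijective fun i => ?_).symm
  rw [shf, update_eq_sub_dvec]
  have e1 : (i + dvec i0 u) - dvec i0 u = i := by abel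
  have e2 : i - (δ - dvec i0 u) = (i + dvec i0 u) - δ := by abel
  rw [e1, e2]

lemma ccor_shf_shf (i0 : Fin r) (u : ℕ) (Z W : Arr r) (δ : Fin r → ℤ) :
    ccor (shf i0 u Z) (shf i0 u W) δ = ccor Z W δ := by
  rw [ccor_shf_left, ccor_shf_right]
  congr 1
  abel

lemma ccor_neg_right (X Z : Arr r) (δ : Fin r → ℤ) :
    ccor X (fun v => - Z v) δ = - ccor X Z δ := by
  unfold ccor
  rw [← finsum_neg_distrib]
  apply finsum_congr
  intro i
  simp [map_neg]

lemma ccor_neg_left (X Z : Arr r) (δ : Fin r → ℤ) :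
    ccor (fun v => - Z v) X δ = - ccor Z X δ := by
  unfold ccor
  rw [← finsum_neg_distrib]
  apply finsum_congr
  intro i
  ring

lemma ccor_neg_neg (Z W : Arr r) (δ : Fin r → ℤ) :
    ccor (fun v => - Z v) (fun v => - W v) δ = ccor Z W δ := by
  rw [ccor_neg_left, ccor_neg_right, neg_neg]

/-- Decomposition of concatenation as a sum. -/
lemma concat_eq_add (i0 : Fin r) (u : ℕ) (X Y : Arr r)
    (hX : ∀ v, (u:ℤ) ≤ v i0 → X v = 0) (hY : ∀ v, v i0 < 0 → Y v = 0) :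
    concat i0 u X Y = fun v => X v + shf i0 u Y v := by
  funext v
  rw [concat, shf]
  split
  · next h =>
    rw [hY _ (by rw [Function.update_self]; omega), add_zero]
  · next h =>
    rw [hX _ (by omega), zero_add]

/-- Bilinearity of correlation for arrays supported on a common box. -/
lemma ccor_add_add {u : Fin r → ℕ} {X Y X' Y' : Arr r}
    (hX : SupportedOn u X) (hY : SupportedOn u Y) (δ : Fin r → ℤ) :
    ccor (fun v => X v + Y v) (fun v => X' v + Y' v) δ
      = ccor X X' δ + ccor X Y' δ + ccor Y X' δ + ccor Y Y' δ := by
  have hXY : SupportedOn u (fun v => X v + Y v) := by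
    intro i hi
    show X i + Y i = 0
    rw [hX i hi, hY i hi, add_zero]
  rw [ccor_eq_sum hXY, ccor_eq_sum hX, ccor_eq_sum hX, ccor_eq_sum hY, ccor_eq_sum hY]
  rw [← Finset.sum_add_distrib, ← Finset.sum_add_distrib, ← Finset.sum_add_distrib]
  refine Finset.sum_congr rfl fun i _ => ?_
  simp only [map_add]
  ring

lemma autocorr_kron {s t : Fin r → ℕ} (ht : ∀ k, 0 < t k) {P Q : Arr r}
    (hP : SupportedOn s P) (hQ : SupportedOn t Q) (δ : Fin r → ℤ) :
    autocorr (kron t P Q) δ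
      = ∑ ρ ∈ box t, (Q ρ * (starRingEnd ℂ) (Q (fun k => (ρ k - δ k) % (t k : ℤ))))
          * autocorr P (fun k => -((ρ k - δ k) / (t k : ℤ))) := by
  classical
  have htk : ∀ k, (0:ℤ) < (t k : ℤ) := fun k => by exact_mod_cast ht k
  rw [autocorr_eq_ccor, ccor_eq_sum (supportedOn_kron ht hP)]
  have step1 : ∑ i ∈ box (fun k => s k * t k),
      kron t P Q i * (starRingEnd ℂ) (kron t P Q (i - δ))
      = ∑ p ∈ (box t) ×ˢ (box s),
        kron t P Q (fun k => p.2 k * (t k : ℤ) + p.1 k)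
          * (starRingEnd ℂ) (kron t P Q ((fun k => p.2 k * (t k : ℤ) + p.1 k) - δ)) := by
    refine Finset.sum_nbij' (fun a => (rd t a, qd t a))
      (fun p => fun k => p.2 k * (t k : ℤ) + p.1 k) ?_ ?_ ?_ ?_ ?_
    · intro a ha
      rw [Finset.mem_product, mem_box, mem_box]
      exact ⟨rd_mem_box ht a, qd_mem_box ht (mem_box.1 ha)⟩
    · intro p hp
      rw [Finset.mem_product, mem_box, mem_box] at hp
      rw [mem_box]
      intro k
      obtain ⟨h1, h2⟩ := hp.1 k
      obtain ⟨h3, h4⟩ := hp.2 k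
      have e1 : (0:ℤ) ≤ p.2 k * (t k:ℤ) := mul_nonneg h3 (le_of_lt (htk k))
      have e2 : (p.2 k + 1) * (t k:ℤ) ≤ (s k : ℤ) * (t k:ℤ) :=
        mul_le_mul_of_nonneg_right (by omega) (le_of_lt (htk k))
      refine ⟨?_, ?_⟩
      · show (0:ℤ) ≤ p.2 k * (t k:ℤ) + p.1 k
        omega
      · show p.2 k * (t k:ℤ) + p.1 k < ((s k * t k : ℕ) : ℤ)
        push_cast
        nlinarith [htk k]
    · intro a ha
      funext k
      simp only [qd, rd]
      rw [mul_comm]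
      exact Int.mul_ediv_add_emod _ _
    · intro p hp
      rw [Finset.mem_product, mem_box, mem_box] at hp
      obtain ⟨hρ, ha⟩ := hp
      have hq : qd t (fun k => p.2 k * (t k:ℤ) + p.1 k) = p.2 := by
        funext k
        simp only [qd]
        rw [add_comm, Int.add_mul_ediv_right _ _ (ne_of_gt (htk k)),
          Int.ediv_eq_zero_of_lt (hρ k).1 (hρ k).2, zero_add]
      have hr : rd t (fun k => p.2 k * (t k:ℤ) + p.1 k) = p.1 := by
        funext k
        simp only [rd]
        rw [add_comm, Int.add_mul_emod_self_right, Int.emod_eq_of_lt (hρ k).1 (hρ k).2]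
      show (rd t (fun k => p.2 k * (t k:ℤ) + p.1 k), qd t (fun k => p.2 k * (t k:ℤ) + p.1 k)) = p
      rw [hq, hr]
    · intro a ha
      have hcomb : (fun k => qd t a k * (t k:ℤ) + rd t a k) = a := by
        funext k
        simp only [qd, rd]
        rw [mul_comm]
        exact Int.mul_ediv_add_emod _ _
      show _ = kron t P Q (fun k => qd t a k * (t k:ℤ) + rd t a k)
        * (starRingEnd ℂ) (kron t P Q ((fun k => qd t a k * (t k:ℤ) + rd t a k) - δ))
      rw [hcomb]
  rw [step1, Finset.sum_product]
  refine Finset.sum_congr rfl fun ρ hρmem => ?_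
  rw [mem_box] at hρmem
  rw [autocorr_eq_ccor, ccor_eq_sum hP, Finset.mul_sum]
  refine Finset.sum_congr rfl fun a hamem => ?_
  -- compute kron at comb
  have hq1 : qd t (fun k => a k * (t k:ℤ) + ρ k) = a := by
    funext k
    simp only [qd]
    rw [add_comm, Int.add_mul_ediv_right _ _ (ne_of_gt (htk k)),
      Int.ediv_eq_zero_of_lt (hρmem k).1 (hρmem k).2, zero_add]
  have hr1 : rd t (fun k => a k * (t k:ℤ) + ρ k) = ρ := by
    funext k
    simp only [rd]
    rw [add_comm, Int.add_mul_emod_self_right, Int.emod_eq_of_lt (hρmem k).1 (hρmem k).2]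
  have hsub : ((fun k => a k * (t k:ℤ) + ρ k) - δ) = fun k => (ρ k - δ k) + a k * (t k:ℤ) := by
    funext k
    simp only [Pi.sub_apply]
    ring
  have hq2 : qd t (fun k => (ρ k - δ k) + a k * (t k:ℤ))
      = fun k => (ρ k - δ k) / (t k:ℤ) + a k := by
    funext k
    simp only [qd]
    rw [Int.add_mul_ediv_right _ _ (ne_of_gt (htk k))]
  have hr2 : rd t (fun k => (ρ k - δ k) + a k * (t k:ℤ))
      = fun k => (ρ k - δ k) % (t k:ℤ) := by
    funext k
    simp only [rd]
    rw [Int.add_mul_emod_self_right]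
  have hsub2 : a - (fun k => -((ρ k - δ k) / (t k : ℤ)))
      = fun k => (ρ k - δ k) / (t k:ℤ) + a k := by
    funext k
    simp only [Pi.sub_apply]
    ring
  rw [kron_apply, kron_apply, hq1, hr1, hsub, hq2, hr2, hsub2, map_mul]
  ring


lemma key_lemma {s t : Fin r → ℕ} (ht : ∀ k, 0 < t k) {A B Q : Arr r}
    (hA : SupportedOn s A) (hB : SupportedOn s B) (hQ : SupportedOn t Q)
    (hAB : ComplementaryPair A B) (δ : Fin r → ℤ) :
    autocorr (kron t A Q) δ + autocorr (kron t B Q) δ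
      = ((weight A + weight B : ℝ) : ℂ) * autocorr Q δ := by
  classical
  have htk : ∀ k, (0:ℤ) < (t k : ℤ) := fun k => by exact_mod_cast ht k
  rw [autocorr_kron ht hA hQ, autocorr_kron ht hB hQ,
    autocorr_eq_ccor Q, ccor_eq_sum hQ, Finset.mul_sum, ← Finset.sum_add_distrib]
  refine Finset.sum_congr rfl fun ρ hρmem => ?_
  rw [mem_box] at hρmem
  rw [← mul_add, hAB]
  by_cases hz : (fun k => -((ρ k - δ k) / (t k : ℤ))) = (0 : Fin r → ℤ)
  · rw [if_pos hz]
    have hbb : ∀ k, 0 ≤ ρ k - δ k ∧ ρ k - δ k < (t k : ℤ) := by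
      intro k
      have := congrFun hz k
      simp only [Pi.zero_apply, neg_eq_zero] at this
      exact (ediv_eq_zero_iff (htk k)).1 this
    have hmod : (fun k => (ρ k - δ k) % (t k : ℤ)) = ρ - δ := by
      funext k
      simp only [Pi.sub_apply]
      exact Int.emod_eq_of_lt (hbb k).1 (hbb k).2
    rw [hmod]
    ring
  · rw [if_neg hz]
    have : Q (ρ - δ) = 0 := by
      apply hQ
      intro hbox
      apply hz
      funext k
      obtain ⟨h1, h2⟩ := hbox k
      simp only [Pi.sub_apply] at h1 h2
      simp only [Pi.zero_apply, neg_eq_zero]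
      exact (ediv_eq_zero_iff (htk k)).2 ⟨h1, h2⟩
    rw [this, map_zero]
    ring


lemma pow_eq_one_of_dvd {x : ℂ} {m n : ℕ} (h : x ^ m = 1) (hd : m ∣ n) : x ^ n = 1 := by
  obtain ⟨c, rfl⟩ := hd
  rw [pow_mul, h, one_pow]

lemma omega_test (m : ℕ) : m ≤ 2 * m := by omega

lemma st_le_sprime (s t : Fin r → ℕ) (i0 : Fin r) (k : Fin r) :
    s k * t k ≤ (if k = i0 then 2 * (s k * t k) else s k * t k) := by
  split <;> omega


lemma omega_cast_test (m : ℕ) (v : ℤ) (h1 : 0 ≤ v - (m:ℤ)) (h2 : v - (m:ℤ) < (m:ℤ)) :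
    v < ((2 * m : ℕ) : ℤ) := by omega

lemma supportedOn_concatEF {s t : Fin r → ℕ} (i0 : Fin r) {P Q : Arr r}
    (hP : SupportedOn (fun k => s k * t k) P) (hQ : SupportedOn (fun k => s k * t k) Q) :
    SupportedOn (fun k => if k = i0 then 2 * (s k * t k) else s k * t k)
      (concat i0 (s i0 * t i0) P Q) := by
  intro v hv
  rw [concat]
  split
  · exact supportedOn_mono (st_le_sprime s t i0) hP v hv
  · next h =>
    apply hQ
    intro hb
    apply hv
    intro k
    have hbk := hb k
    rw [Function.update_apply] at hbk
    by_cases hk : k = i0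
    · subst hk
      have hred : ((fun k_1 => if k_1 = k then 2 * (s k_1 * t k_1) else s k_1 * t k_1) k)
          = 2 * (s k * t k) := by simp
      rw [hred]
      rw [if_pos rfl] at hbk
      have hc : ((fun k => s k * t k) k : ℕ) = s k * t k := rfl
      rw [hc] at hbk
      obtain ⟨h1, h2⟩ := hbk
      omega
    · simp only [if_neg hk] at hbk ⊢
      exact hbk

lemma inBox_first {s t : Fin r → ℕ} {i0 : Fin r} {v : Fin r → ℤ}
    (hv : InBox (fun k => if k = i0 then 2 * (s k * t k) else s k * t k) v)
    (h : v i0 < ((s i0 * t i0 : ℕ) : ℤ)) : InBox (fun k => s k * t k) v := by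
  intro k
  have hk := hv k
  by_cases hki : k = i0
  · subst hki
    exact ⟨hk.1, h⟩
  · simp only [if_neg hki] at hk
    exact hk

lemma inBox_second {s t : Fin r → ℕ} {i0 : Fin r} {v : Fin r → ℤ}
    (hv : InBox (fun k => if k = i0 then 2 * (s k * t k) else s k * t k) v)
    (h : ¬ v i0 < ((s i0 * t i0 : ℕ) : ℤ)) :
    InBox (fun k => s k * t k) (Function.update v i0 (v i0 - ((s i0 * t i0 : ℕ) : ℤ))) := by
  intro k
  have hk := hv k
  rw [Function.update_apply]
  by_cases hki : k = i0
  · subst hki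
    have hred : ((fun k_1 => if k_1 = k then 2 * (s k_1 * t k_1) else s k_1 * t k_1) k)
        = 2 * (s k * t k) := by simp
    rw [hred] at hk
    rw [if_pos rfl]
    have hc : ((fun k => s k * t k) k : ℕ) = s k * t k := rfl
    rw [hc]
    obtain ⟨h1, h2⟩ := hk
    omega
  · simp only [if_neg hki] at hk ⊢
    exact hk

lemma kron_pow_eq_one {s t : Fin r → ℕ} (ht : ∀ k, 0 < t k) {P Q : Arr r} {NP NQ N : ℕ}
    (hP : ∀ i, InBox s i → P i ^ NP = 1) (hQ : ∀ i, InBox t i → Q i ^ NQ = 1)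
    (hdP : NP ∣ N) (hdQ : NQ ∣ N) {v : Fin r → ℤ}
    (hv : InBox (fun k => s k * t k) v) : (kron t P Q v) ^ N = 1 := by
  rw [kron_apply, mul_pow,
    pow_eq_one_of_dvd (hP _ (qd_mem_box ht hv)) hdP,
    pow_eq_one_of_dvd (hQ _ (rd_mem_box ht v)) hdQ, one_mul]

lemma flipConj_pow {s : Fin r → ℕ} {P : Arr r} {NP : ℕ}
    (hP : ∀ i, InBox s i → P i ^ NP = 1) :
    ∀ i, InBox s i → (flipConj s P i) ^ NP = 1 := by
  intro i hi
  rw [flipConj, ← map_pow, hP _ (fun k => by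
    obtain ⟨h1, h2⟩ := hi k
    show (0:ℤ) ≤ (s k:ℤ) - 1 - i k ∧ (s k:ℤ) - 1 - i k < (s k:ℤ)
    omega), map_one]


lemma supportedOn_shf {s t : Fin r → ℕ} (i0 : Fin r) {Z : Arr r}
    (hZ : SupportedOn (fun k => s k * t k) Z) :
    SupportedOn (fun k => if k = i0 then 2 * (s k * t k) else s k * t k)
      (shf i0 (s i0 * t i0) Z) := by
  intro v hv
  apply hZ
  intro hb
  apply hv
  intro k
  have hbk := hb k
  rw [Function.update_apply] at hbk
  by_cases hk : k = i0
  · subst hk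
    have hred : ((fun k_1 => if k_1 = k then 2 * (s k_1 * t k_1) else s k_1 * t k_1) k)
        = 2 * (s k * t k) := by simp
    rw [hred]
    rw [if_pos rfl] at hbk
    have hc : ((fun k => s k * t k) k : ℕ) = s k * t k := rfl
    rw [hc] at hbk
    obtain ⟨h1, h2⟩ := hbk
    omega
  · simp only [if_neg hk] at hbk ⊢
    exact hbk

end Stmt7Aux

open Stmt7Aux

/-- From polyphase GCA pairs {A,B} of size s and {C,D} of size t, the
concatenations E = (A⊗C)|(B⊗D) and F = (B*⊗C)|(−A*⊗D) in dimension i0 form a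
polyphase GCA pair of size s₁t₁×⋯×2 s_{i0} t_{i0}×⋯×s_r t_r. -/
theorem stmt7 {r : ℕ} (s t : Fin r → ℕ) (i0 : Fin r) (A B C D : Arr r)
    (hA : IsPolyphase s A) (hB : IsPolyphase s B) (hAB : ComplementaryPair A B)
    (hC : IsPolyphase t C) (hD : IsPolyphase t D) (hCD : ComplementaryPair C D)
    (E F : Arr r)
    (hE : E = concat i0 (s i0 * t i0) (kron t A C) (kron t B D))
    (hF : F = concat i0 (s i0 * t i0) (kron t (flipConj s B) C)
      (fun v => -kron t (flipConj s A) D v)) :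
    IsPolyphase (fun k => if k = i0 then 2 * (s k * t k) else s k * t k) E ∧
      IsPolyphase (fun k => if k = i0 then 2 * (s k * t k) else s k * t k) F ∧
      ComplementaryPair E F := by
  classical
  subst hE hF
  by_cases hpos : ∀ k, 0 < s k ∧ 0 < t k
  · -- main case
    have ht : ∀ k, 0 < t k := fun k => (hpos k).2
    obtain ⟨hAsup, NA, hNA0, hNA⟩ := hA
    obtain ⟨hBsup, NB, hNB0, hNB⟩ := hB
    obtain ⟨hCsup, NC, hNC0, hNC⟩ := hC
    obtain ⟨hDsup, ND, hND0, hND⟩ := hD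
    have hXsup : SupportedOn (fun k => s k * t k) (kron t A C) := supportedOn_kron ht hAsup
    have hYsup : SupportedOn (fun k => s k * t k) (kron t B D) := supportedOn_kron ht hBsup
    have hX'sup : SupportedOn (fun k => s k * t k) (kron t (flipConj s B) C) :=
      supportedOn_kron ht (supportedOn_flipConj hBsup)
    have hY'sup : SupportedOn (fun k => s k * t k) (kron t (flipConj s A) D) :=
      supportedOn_kron ht (supportedOn_flipConj hAsup)
    have hY'negsup : SupportedOn (fun k => s k * t k) (fun v => -kron t (flipConj s A) D v) :=
      fun v hv => by
        show -kron t (flipConj s A) D v = 0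
        rw [hY'sup v hv, neg_zero]
    have hEsup := supportedOn_concatEF i0 hXsup hYsup
    have hFsup := supportedOn_concatEF i0 hX'sup hY'negsup
    have hN0 : 0 < 2 * (NA * NB * NC * ND) := by positivity
    have hNeven : Even (2 * (NA * NB * NC * ND)) := ⟨NA * NB * NC * ND, by ring⟩
    -- the decomposition of the concatenations
    have hXv : ∀ v, ((s i0 * t i0 : ℕ) : ℤ) ≤ v i0 → kron t A C v = 0 := fun v hvv =>
      hXsup v fun hb => by
        have h2 := (hb i0).2
        have hc : ((fun k => s k * t k) i0 : ℕ) = s i0 * t i0 := rfl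
        rw [hc] at h2
        omega
    have hX'v : ∀ v, ((s i0 * t i0 : ℕ) : ℤ) ≤ v i0 → kron t (flipConj s B) C v = 0 :=
      fun v hvv => hX'sup v fun hb => by
        have h2 := (hb i0).2
        have hc : ((fun k => s k * t k) i0 : ℕ) = s i0 * t i0 := rfl
        rw [hc] at h2
        omega
    have hYv : ∀ v, v i0 < 0 → kron t B D v = 0 := fun v hvv =>
      hYsup v fun hb => by have h1 := (hb i0).1; omega
    have hY'negv : ∀ v, v i0 < 0 → (fun w => -kron t (flipConj s A) D w) v = 0 := fun v hvv => by
      show -kron t (flipConj s A) D v = 0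
      rw [hY'sup v fun hb => by have h1 := (hb i0).1; omega, neg_zero]
    have hEdec := concat_eq_add i0 (s i0 * t i0) (kron t A C) (kron t B D) hXv hYv
    have hFdec := concat_eq_add i0 (s i0 * t i0) (kron t (flipConj s B) C)
      (fun v => -kron t (flipConj s A) D v) hX'v hY'negv
    -- the main correlation computation
    have hval : ∀ δ : Fin r → ℤ,
        autocorr (concat i0 (s i0 * t i0) (kron t A C) (kron t B D)) δ
          + autocorr (concat i0 (s i0 * t i0) (kron t (flipConj s B) C)
              (fun v => -kron t (flipConj s A) D v)) δ
        = ((weight A + weight B : ℝ) : ℂ)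
            * (if δ = 0 then ((weight C + weight D : ℝ) : ℂ) else 0) := by
      intro δ
      rw [autocorr_eq_ccor, autocorr_eq_ccor, hEdec, hFdec,
        ccor_add_add (supportedOn_mono (st_le_sprime s t i0) hXsup) (supportedOn_shf i0 hYsup) δ,
        ccor_add_add (supportedOn_mono (st_le_sprime s t i0) hX'sup)
          (supportedOn_shf i0 hY'negsup) δ]
      simp only [ccor_shf_right, ccor_shf_left, ccor_neg_right, ccor_neg_left, neg_neg,
        add_sub_cancel_right]
      rw [ccor_kron_flip s t ht A B C D (δ + dvec i0 (s i0 * t i0)),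
        ccor_kron_flip s t ht B A D C (δ - dvec i0 (s i0 * t i0))]
      have h3 : ccor (kron t (flipConj s B) C) (kron t (flipConj s B) C) δ
          = ccor (kron t B C) (kron t B C) δ := by
        have h := ccor_kron_flip s t ht (flipConj s B) (flipConj s B) C C δ
        rw [flipConj_flipConj] at h
        exact h
      have h4 : ccor (kron t (flipConj s A) D) (kron t (flipConj s A) D) δ
          = ccor (kron t A D) (kron t A D) δ := by
        have h := ccor_kron_flip s t ht (flipConj s A) (flipConj s A) D D δ
        rw [flipConj_flipConj] at h
        exact h
      rw [h3, h4]
      have h5 := key_lemma ht hAsup hBsup hCsup hAB δ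
      have h6 := key_lemma ht hAsup hBsup hDsup hAB δ
      have hCDc := hCD δ
      simp only [autocorr_eq_ccor] at h5 h6 hCDc
      linear_combination h5 + h6 + ((weight A + weight B : ℝ) : ℂ) * hCDc
    refine ⟨⟨hEsup, 2 * (NA * NB * NC * ND), hN0, ?_⟩,
      ⟨hFsup, 2 * (NA * NB * NC * ND), hN0, ?_⟩, ?_⟩
    · intro v hv
      rw [concat]
      split
      · next h =>
        exact kron_pow_eq_one ht hNA hNC ⟨2 * (NB * NC * ND), by ring⟩
          ⟨2 * (NA * NB * ND), by ring⟩ (inBox_first hv h)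
      · next h =>
        exact kron_pow_eq_one ht hNB hND ⟨2 * (NA * NC * ND), by ring⟩
          ⟨2 * (NA * NB * NC), by ring⟩ (inBox_second hv h)
    · intro v hv
      rw [concat]
      split
      · next h =>
        exact kron_pow_eq_one ht (flipConj_pow hNB) hNC ⟨2 * (NA * NC * ND), by ring⟩
          ⟨2 * (NA * NB * ND), by ring⟩ (inBox_first hv h)
      · next h =>
        show (-kron t (flipConj s A) D _) ^ (2 * (NA * NB * NC * ND)) = 1
        rw [Even.neg_pow hNeven]
        exact kron_pow_eq_one ht (flipConj_pow hNA) hND ⟨2 * (NB * NC * ND), by ring⟩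
          ⟨2 * (NA * NB * NC), by ring⟩ (inBox_second hv h)
    · intro δ
      have hwEF : ((weight (concat i0 (s i0 * t i0) (kron t A C) (kron t B D))
            + weight (concat i0 (s i0 * t i0) (kron t (flipConj s B) C)
                (fun v => -kron t (flipConj s A) D v)) : ℝ) : ℂ)
          = ((weight A + weight B : ℝ) : ℂ) * ((weight C + weight D : ℝ) : ℂ) := by
        rw [Complex.ofReal_add, weight_eq_autocorr_zero hEsup, weight_eq_autocorr_zero hFsup]
        have h := hval 0
        rw [if_pos rfl] at h
        exact h
      rw [hval δ]
      by_cases hδ : δ = 0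
      · rw [if_pos hδ, if_pos hδ, hwEF]
      · rw [if_neg hδ, if_neg hδ, mul_zero]
  · -- degenerate case
    have hdeg : ∃ k, s k * t k = 0 := by
      push_neg at hpos
      obtain ⟨k, hk⟩ := hpos
      exact ⟨k, by
        rcases Nat.eq_zero_or_pos (s k) with h | h
        · rw [h, Nat.zero_mul]
        · have h2 : t k = 0 := by have := hk h; omega
          rw [h2, Nat.mul_zero]⟩
    obtain ⟨k0, hk0⟩ := hdeg
    have hzero : ∀ v, kron t A C v = 0 ∧ kron t B D v = 0 ∧ kron t (flipConj s B) C v = 0 ∧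
        kron t (flipConj s A) D v = 0 := by
      intro v
      rcases Nat.mul_eq_zero.1 hk0 with h | h
      · have hA0 : ∀ i, A i = 0 := fun i => hA.1 i fun hb => by
          obtain ⟨h1, h2⟩ := hb k0
          rw [h] at h2
          omega
        have hB0 : ∀ i, B i = 0 := fun i => hB.1 i fun hb => by
          obtain ⟨h1, h2⟩ := hb k0
          rw [h] at h2
          omega
        refine ⟨?_, ?_, ?_, ?_⟩ <;> rw [kron_apply]
        · rw [hA0, zero_mul]
        · rw [hB0, zero_mul]
        · rw [flipConj, hB0, map_zero, zero_mul]
        · rw [flipConj, hA0, map_zero, zero_mul]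
      · have hC0 : ∀ i, C i = 0 := fun i => hC.1 i fun hb => by
          obtain ⟨h1, h2⟩ := hb k0
          rw [h] at h2
          omega
        have hD0 : ∀ i, D i = 0 := fun i => hD.1 i fun hb => by
          obtain ⟨h1, h2⟩ := hb k0
          rw [h] at h2
          omega
        refine ⟨?_, ?_, ?_, ?_⟩ <;> rw [kron_apply]
        · rw [hC0, mul_zero]
        · rw [hD0, mul_zero]
        · rw [hC0, mul_zero]
        · rw [hD0, mul_zero]
    have hE0 : ∀ v, concat i0 (s i0 * t i0) (kron t A C) (kron t B D) v = 0 := by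
      intro v
      rw [concat]
      split
      · exact (hzero v).1
      · exact (hzero _).2.1
    have hF0 : ∀ v, concat i0 (s i0 * t i0) (kron t (flipConj s B) C)
        (fun v => -kron t (flipConj s A) D v) v = 0 := by
      intro v
      rw [concat]
      split
      · exact (hzero v).2.2.1
      · show -kron t (flipConj s A) D _ = 0
        rw [(hzero _).2.2.2, neg_zero]
    have hbox0 : ∀ i : Fin r → ℤ,
        ¬ InBox (fun k => if k = i0 then 2 * (s k * t k) else s k * t k) i := by
      intro i hi
      obtain ⟨h1, h2⟩ := hi k0
      have hred : ((fun k => if k = i0 then 2 * (s k * t k) else s k * t k) k0) = 0 := by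
        simp [hk0]
      rw [hred] at h2
      omega
    have hac : ∀ (G : Arr r), (∀ v, G v = 0) → ∀ δ, autocorr G δ = 0 := by
      intro G hG δ
      rw [autocorr]
      apply finsum_eq_zero_of_forall_eq_zero
      intro i
      rw [hG i, zero_mul]
    have hw : ∀ (G : Arr r), (∀ v, G v = 0) → weight G = 0 := by
      intro G hG
      rw [weight]
      apply finsum_eq_zero_of_forall_eq_zero
      intro i
      rw [hG i]
      simp
    refine ⟨⟨fun v _ => hE0 v, 1, one_pos, fun i hi => absurd hi (hbox0 i)⟩,
      ⟨fun v _ => hF0 v, 1, one_pos, fun i hi => absurd hi (hbox0 i)⟩, ?_⟩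
    intro δ
    rw [hac _ hE0, hac _ hF0, hw _ hE0, hw _ hF0]
    simp
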